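/- Assume V is symmetric positive definite with the completeness property and ρ is a probability density strictly positive on (0,∞). Define Δ(ψ) = ∫_0^∞ ⟨e^{tA}ψ, g⟩² ρ(t) dt for ψ ∈ ℝ^{2n}, where g is the standard basis vector of ℝ^{2n} in the direction of the first momentum coordinate (coordinate n+1). Then Δ is a positive definite quadratic form on ℝ^{2n}: Δ(ψ) = 0 implies ψ = 0, and consequently there exists a constant r > 0 such that Δ(ψ) ≥ r H(ψ) for all ψ ∈ ℝ^{2n}. -/

import Mathlib

open Matrix MeasureTheory
open NormedSpace

variable {n : ℕ}

/-- The Hamiltonian matrix `A = [[0, (1/M)I], [−V, 0]]` on `L = ℝ^n × ℝ^n`. -/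
noncomputable def hamMatrix (M : ℝ) (V : Matrix (Fin n) (Fin n) ℝ) :
    Matrix (Fin n ⊕ Fin n) (Fin n ⊕ Fin n) ℝ :=
  Matrix.fromBlocks 0 ((1 / M) • 1) (-V) 0

/-- The energy `H(q,p) = |p|²/(2M) + (1/2)⟨q, Vq⟩`. -/
noncomputable def energy (M : ℝ) (V : Matrix (Fin n) (Fin n) ℝ)
    (ψ : (Fin n ⊕ Fin n) → ℝ) : ℝ :=
  (1 / (2 * M)) * (∑ i, ψ (Sum.inr i) ^ 2) +
    (1 / 2) * ((fun i => ψ (Sum.inl i)) ⬝ᵥ V.mulVec (fun i => ψ (Sum.inl i)))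

/-- `Δ(ψ) = ∫_0^∞ ⟨e^{tA}ψ, g⟩² ρ(t) dt`, where `g` is the direction of the first momentum
coordinate. -/
noncomputable def Delta (hn : 0 < n) (M : ℝ) (V : Matrix (Fin n) (Fin n) ℝ) (ρ : ℝ → ℝ)
    (ψ : (Fin n ⊕ Fin n) → ℝ) : ℝ :=
  ∫ t in Set.Ioi (0 : ℝ),
    ((NormedSpace.exp (t • hamMatrix M V)).mulVec ψ ⬝ᵥ
      Pi.single (Sum.inr (⟨0, hn⟩ : Fin n)) 1) ^ 2 * ρ t



/-- Generic comparison of quadratic-homogeneous functions via compactness. -/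
lemma quad_compare {E : Type*} [NormedAddCommGroup E] [NormedSpace ℝ E]
    [FiniteDimensional ℝ E] (f g : E → ℝ) (hf : Continuous f) (hg : Continuous g)
    (hfh : ∀ (c : ℝ) x, f (c • x) = c ^ 2 * f x)
    (hgh : ∀ (c : ℝ) x, g (c • x) = c ^ 2 * g x)
    (hfpos : ∀ x, x ≠ 0 → 0 < f x) :
    ∃ r : ℝ, 0 < r ∧ ∀ x, r * g x ≤ f x := by
  have hf0 : f 0 = 0 := by
    have := hfh 0 0; simpa using this
  have hg0 : g 0 = 0 := by
    have := hgh 0 0; simpa using this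
  rcases subsingleton_or_nontrivial E with hE | hE
  · exact ⟨1, one_pos, fun x => by
      rw [Subsingleton.elim x 0, hf0, hg0]; simp⟩
  · obtain ⟨u0, hu0, hmin⟩ := (isCompact_sphere (0 : E) 1).exists_isMinOn
      (NormedSpace.sphere_nonempty.2 zero_le_one) hf.continuousOn
    obtain ⟨v0, hv0, hmax⟩ := (isCompact_sphere (0 : E) 1).exists_isMaxOn
      (NormedSpace.sphere_nonempty.2 zero_le_one) hg.continuousOn
    have hm : 0 < f u0 := by
      apply hfpos
      intro h
      rw [Metric.mem_sphere, h] at hu0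
      simp at hu0
    set C : ℝ := max (g v0) 1 with hC
    have hCpos : 0 < C := lt_of_lt_of_le one_pos (le_max_right _ _)
    refine ⟨f u0 / C, div_pos hm hCpos, fun x => ?_⟩
    rcases eq_or_ne x 0 with rfl | hx
    · rw [hf0, hg0]; simp
    · have hnx : (0:ℝ) < ‖x‖ := norm_pos_iff.2 hx
      set u : E := ‖x‖⁻¹ • x with hu
      have hus : u ∈ Metric.sphere (0:E) 1 := by
        simp [hu, norm_smul, abs_of_pos (inv_pos.2 hnx), inv_mul_cancel₀ hnx.ne']
      have hxu : x = ‖x‖ • u := by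
        rw [hu, smul_smul, mul_inv_cancel₀ hnx.ne', one_smul]
      have hgx : g x ≤ ‖x‖ ^ 2 * C := by
        conv_lhs => rw [hxu]
        rw [hgh]
        have : g u ≤ C := le_trans (hmax hus) (le_max_left _ _)
        nlinarith [sq_nonneg ‖x‖]
      have hfx : ‖x‖ ^ 2 * f u0 ≤ f x := by
        conv_rhs => rw [hxu]
        rw [hfh]
        have : f u0 ≤ f u := hmin hus
        nlinarith [sq_nonneg ‖x‖]
      calc f u0 / C * g x ≤ f u0 / C * (‖x‖ ^ 2 * C) := by
            apply mul_le_mul_of_nonneg_left hgx (le_of_lt (div_pos hm hCpos))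
        _ = ‖x‖ ^ 2 * f u0 := by field_simp
        _ ≤ f x := hfx


/-- The symmetric matrix of the (doubled) energy form. -/
noncomputable def Smat (M : ℝ) (V : Matrix (Fin n) (Fin n) ℝ) :
    Matrix (Fin n ⊕ Fin n) (Fin n ⊕ Fin n) ℝ :=
  Matrix.fromBlocks V 0 0 ((1 / M) • 1)

lemma ham_sq (M : ℝ) (V : Matrix (Fin n) (Fin n) ℝ) :
    hamMatrix M V ^ 2 =
      Matrix.fromBlocks ((-(1/M)) • V) 0 0 ((-(1/M)) • V) := by
  rw [sq, hamMatrix, Matrix.fromBlocks_multiply]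
  congr 1 <;> simp [Matrix.smul_mul, Matrix.mul_smul]

lemma ham_pow_even (M : ℝ) (V : Matrix (Fin n) (Fin n) ℝ) (k : ℕ) :
    hamMatrix M V ^ (2 * k) =
      Matrix.fromBlocks ((((-(1/M)) • V) ^ k)) 0 0 ((((-(1/M)) • V) ^ k)) := by
  induction k with
  | zero => simp [Matrix.fromBlocks_one]
  | succ k ih =>
    have : 2 * (k + 1) = 2 * k + 2 := by ring
    rw [this, pow_add, ih, ham_sq, Matrix.fromBlocks_multiply, pow_succ]
    congr 1 <;> simp

lemma ham_pow_odd (M : ℝ) (V : Matrix (Fin n) (Fin n) ℝ) (k : ℕ) :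
    hamMatrix M V ^ (2 * k + 1) =
      Matrix.fromBlocks 0 ((1/M) • (((-(1/M)) • V) ^ k))
        ((((-(1/M)) • V) ^ k) * (-V)) 0 := by
  rw [pow_succ, ham_pow_even, hamMatrix, Matrix.fromBlocks_multiply]
  congr 1 <;> simp [Matrix.mul_smul, Matrix.mul_one]

lemma hamT_S (M : ℝ) (V : Matrix (Fin n) (Fin n) ℝ) (hV : Vᵀ = V) :
    (hamMatrix M V)ᵀ * Smat M V + Smat M V * hamMatrix M V = 0 := by
  rw [hamMatrix, Smat, Matrix.fromBlocks_transpose, Matrix.fromBlocks_multiply,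
    Matrix.fromBlocks_multiply]
  have h1 : ((1/M : ℝ) • (1 : Matrix (Fin n) (Fin n) ℝ))ᵀ = (1/M : ℝ) • 1 := by
    simp [Matrix.transpose_smul]
  rw [Matrix.transpose_zero, Matrix.transpose_neg, hV, h1]
  ext (i|i) (j|j) <;>
    simp [Matrix.fromBlocks, Matrix.smul_mul, Matrix.mul_smul, Matrix.neg_mul,
      Matrix.mul_neg, Matrix.mul_one, Matrix.one_mul]

lemma kill_of_span (f : ℕ → (Fin n → ℝ))
    (hspan : Submodule.span ℝ (Set.range f) = ⊤)
    (p : Fin n → ℝ) (horth : ∀ k, f k ⬝ᵥ p = 0) : p = 0 := by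
  have hφ : ∀ x : Fin n → ℝ, x ⬝ᵥ p = 0 := by
    let φ : (Fin n → ℝ) →ₗ[ℝ] ℝ :=
      { toFun := fun x => x ⬝ᵥ p
        map_add' := fun x y => add_dotProduct x y p
        map_smul' := fun c x => smul_dotProduct c x p }
    intro x
    have hx : x ∈ Submodule.span ℝ (Set.range f) := by rw [hspan]; trivial
    have hle : Submodule.span ℝ (Set.range f) ≤ LinearMap.ker φ := by
      rw [Submodule.span_le]
      rintro _ ⟨k, rfl⟩
      exact horth k
    exact hle hx
  have := hφ p
  rwa [dotProduct_self_eq_zero] at this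

lemma dot_symm_pow (V : Matrix (Fin n) (Fin n) ℝ) (hsym : Vᵀ = V) (k : ℕ)
    (i0 : Fin n) (p : Fin n → ℝ) :
    ((V ^ k) *ᵥ Pi.single i0 1) ⬝ᵥ p = ((V ^ k) *ᵥ p) i0 := by
  have hT : (V ^ k)ᵀ = V ^ k := by rw [Matrix.transpose_pow, hsym]
  rw [Matrix.mulVec_single_one]
  simp only [dotProduct, Matrix.mulVec, Matrix.col_apply, mul_one]
  refine Finset.sum_congr rfl fun j _ => ?_
  have : (V ^ k) j i0 = (V ^ k) i0 j := by
    conv_lhs => rw [← hT]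
    rfl
  rw [this]

lemma span_shift (V : Matrix (Fin n) (Fin n) ℝ) (hdet : IsUnit V.det) (i0 : Fin n)
    (hspan : Submodule.span ℝ
      (Set.range fun k : ℕ => (V ^ k) *ᵥ Pi.single i0 1) = ⊤) :
    Submodule.span ℝ (Set.range fun k : ℕ => (V ^ (k + 1)) *ᵥ Pi.single i0 1) = ⊤ := by
  have hsurj : Function.Surjective (V.mulVecLin) := by
    intro y
    refine ⟨V⁻¹ *ᵥ y, ?_⟩
    simp [Matrix.mulVecLin_apply, Matrix.mulVec_mulVec, Matrix.mul_nonsing_inv _ hdet]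
  have hmap := Submodule.map_span V.mulVecLin
    (Set.range fun k : ℕ => (V ^ k) *ᵥ Pi.single i0 1)
  rw [hspan] at hmap
  have htop : Submodule.map V.mulVecLin ⊤ = ⊤ := by
    rw [Submodule.map_top, LinearMap.range_eq_top]
    exact hsurj
  rw [htop] at hmap
  rw [hmap]
  congr 1
  rw [← Set.range_comp]
  refine congrArg _ (funext fun k => ?_)
  simp only [Function.comp_apply, Matrix.mulVecLin_apply, Matrix.mulVec_mulVec]
  rw [← pow_succ']

section Flow

variable (Mc : ℝ) (V : Matrix (Fin n) (Fin n) ℝ)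

lemma exp_flow_continuous (A : Matrix (Fin n ⊕ Fin n) (Fin n ⊕ Fin n) ℝ) :
    Continuous fun t : ℝ => exp (t • A) := by
  letI : SeminormedRing (Matrix (Fin n ⊕ Fin n) (Fin n ⊕ Fin n) ℝ) :=
    Matrix.linftyOpSemiNormedRing
  letI : NormedRing (Matrix (Fin n ⊕ Fin n) (Fin n ⊕ Fin n) ℝ) := Matrix.linftyOpNormedRing
  letI : NormedAlgebra ℝ (Matrix (Fin n ⊕ Fin n) (Fin n ⊕ Fin n) ℝ) :=
    Matrix.linftyOpNormedAlgebra
  letI : NormedAlgebra ℚ (Matrix (Fin n ⊕ Fin n) (Fin n ⊕ Fin n) ℝ) :=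
    NormedAlgebra.restrictScalars ℚ ℝ _
  exact exp_continuous.comp (continuous_id.smul continuous_const)

/-- The linear map `X ↦ (X * B) *ᵥ ψ`. -/
noncomputable def matApply (B : Matrix (Fin n ⊕ Fin n) (Fin n ⊕ Fin n) ℝ)
    (ψ : (Fin n ⊕ Fin n) → ℝ) :
    Matrix (Fin n ⊕ Fin n) (Fin n ⊕ Fin n) ℝ →ₗ[ℝ] ((Fin n ⊕ Fin n) → ℝ) where
  toFun X := (X * B) *ᵥ ψ
  map_add' X Y := by rw [Matrix.add_mul, Matrix.add_mulVec]
  map_smul' c X := by rw [Matrix.smul_mul, Matrix.smul_mulVec]; rfl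

lemma hasDerivAt_flow_mul (A B : Matrix (Fin n ⊕ Fin n) (Fin n ⊕ Fin n) ℝ)
    (ψ : (Fin n ⊕ Fin n) → ℝ) (t : ℝ) :
    HasDerivAt (fun s : ℝ => (exp (s • A) * B) *ᵥ ψ)
      ((exp (t • A) * A * B) *ᵥ ψ) t := by
  letI : SeminormedRing (Matrix (Fin n ⊕ Fin n) (Fin n ⊕ Fin n) ℝ) :=
    Matrix.linftyOpSemiNormedRing
  letI : NormedRing (Matrix (Fin n ⊕ Fin n) (Fin n ⊕ Fin n) ℝ) := Matrix.linftyOpNormedRing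
  letI : NormedAlgebra ℝ (Matrix (Fin n ⊕ Fin n) (Fin n ⊕ Fin n) ℝ) :=
    Matrix.linftyOpNormedAlgebra
  have h := hasDerivAt_exp_smul_const (𝕂 := ℝ) A t
  have h2 := ((matApply B ψ).toContinuousLinearMap.hasFDerivAt
    (x := exp (t • A))).comp_hasDerivAt t h
  exact h2

lemma hasDerivAt_flow (A : Matrix (Fin n ⊕ Fin n) (Fin n ⊕ Fin n) ℝ)
    (ψ : (Fin n ⊕ Fin n) → ℝ) (t : ℝ) :
    HasDerivAt (fun s : ℝ => exp (s • A) *ᵥ ψ)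
      (A *ᵥ (exp (t • A) *ᵥ ψ)) t := by
  letI : SeminormedRing (Matrix (Fin n ⊕ Fin n) (Fin n ⊕ Fin n) ℝ) :=
    Matrix.linftyOpSemiNormedRing
  letI : NormedRing (Matrix (Fin n ⊕ Fin n) (Fin n ⊕ Fin n) ℝ) := Matrix.linftyOpNormedRing
  letI : NormedAlgebra ℝ (Matrix (Fin n ⊕ Fin n) (Fin n ⊕ Fin n) ℝ) :=
    Matrix.linftyOpNormedAlgebra
  have h := hasDerivAt_flow_mul A 1 ψ t
  have hcomm : exp (t • A) * A = A * exp (t • A) :=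
    (((Commute.refl A).smul_left t).exp_left).eq
  simp only [Matrix.mul_one] at h
  rw [hcomm, ← Matrix.mulVec_mulVec] at h
  exact h

end Flow

section Energy

lemma quad_form_continuous {N : Type*} [Fintype N]
    (B : Matrix N N ℝ) : Continuous fun x : N → ℝ => x ⬝ᵥ B *ᵥ x := by
  simp only [dotProduct, Matrix.mulVec]
  exact continuous_finset_sum _ fun i _ =>
    (continuous_apply i).mul (continuous_finset_sum _ fun j _ =>
      continuous_const.mul (continuous_apply j))

lemma quad_form_homog {N : Type*} [Fintype N]
    (B : Matrix N N ℝ) (c : ℝ) (x : N → ℝ) :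
    (c • x) ⬝ᵥ B *ᵥ (c • x) = c ^ 2 * (x ⬝ᵥ B *ᵥ x) := by
  rw [smul_dotProduct, Matrix.mulVec_smul, dotProduct_smul]
  simp [smul_eq_mul]; ring

lemma quad_deriv_zero {N : Type*} [Fintype N] (S A : Matrix N N ℝ)
    (hS : Sᵀ = S) (hid : Aᵀ * S + S * A = 0) (u : N → ℝ) :
    (A *ᵥ u) ⬝ᵥ (S *ᵥ u) + u ⬝ᵥ (S *ᵥ (A *ᵥ u)) = 0 := by
  have t1 : (A *ᵥ u) ⬝ᵥ (S *ᵥ u) = ((S * A) *ᵥ u) ⬝ᵥ u := by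
    rw [Matrix.dotProduct_mulVec, ← Matrix.mulVec_transpose, hS, Matrix.mulVec_mulVec]
  have t2 : u ⬝ᵥ (S *ᵥ (A *ᵥ u)) = ((Aᵀ * S) *ᵥ u) ⬝ᵥ u := by
    rw [Matrix.mulVec_mulVec, Matrix.dotProduct_mulVec, ← Matrix.mulVec_transpose,
      Matrix.transpose_mul, hS]
  rw [t1, t2, ← add_dotProduct, ← Matrix.add_mulVec, add_comm (S * A), hid]
  simp

lemma Smat_transpose (M : ℝ) (V : Matrix (Fin n) (Fin n) ℝ) (hsym : Vᵀ = V) :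
    (Smat M V)ᵀ = Smat M V := by
  rw [Smat, Matrix.fromBlocks_transpose, hsym]
  simp [Matrix.transpose_smul]

lemma energy_conserved (M : ℝ) (V : Matrix (Fin n) (Fin n) ℝ) (hsym : Vᵀ = V)
    (ψ : (Fin n ⊕ Fin n) → ℝ) (t : ℝ) :
    (exp (t • hamMatrix M V) *ᵥ ψ) ⬝ᵥ (Smat M V *ᵥ (exp (t • hamMatrix M V) *ᵥ ψ)) =
      ψ ⬝ᵥ (Smat M V *ᵥ ψ) := by
  set A := hamMatrix M V with hA
  set u : ℝ → ((Fin n ⊕ Fin n) → ℝ) := fun s => exp (s • A) *ᵥ ψ with hu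
  have hderiv : ∀ s : ℝ, HasDerivAt (fun r => u r ⬝ᵥ (Smat M V *ᵥ u r)) 0 s := by
    intro s
    have hus : HasDerivAt u (A *ᵥ u s) s := hasDerivAt_flow A ψ s
    have hc : ∀ i, HasDerivAt (fun r => u r i) ((A *ᵥ u s) i) s :=
      fun i => hasDerivAt_pi.1 hus i
    have hsum : HasDerivAt (fun r => ∑ i, u r i * ∑ j, Smat M V i j * u r j)
        (∑ i, ((A *ᵥ u s) i * ∑ j, Smat M V i j * u s j +
          u s i * ∑ j, Smat M V i j * (A *ᵥ u s) j)) s :=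
      HasDerivAt.fun_sum fun i _ =>
        ((hc i).mul (HasDerivAt.fun_sum fun j _ => (hc j).const_mul _))
    have heq : (fun r => u r ⬝ᵥ (Smat M V *ᵥ u r)) =
        fun r => ∑ i, u r i * ∑ j, Smat M V i j * u r j := by
      funext r; simp [dotProduct, Matrix.mulVec]
    have hval : (∑ i, ((A *ᵥ u s) i * ∑ j, Smat M V i j * u s j +
          u s i * ∑ j, Smat M V i j * (A *ᵥ u s) j)) = 0 := by
      have := quad_deriv_zero (Smat M V) A (Smat_transpose M V hsym)
        (hamT_S M V hsym) (u s)
      simpa [dotProduct, Matrix.mulVec, Finset.sum_add_distrib] using this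
    rw [heq, ← hval]
    exact hsum
  have hconst : ∀ s : ℝ, (fun r => u r ⬝ᵥ (Smat M V *ᵥ u r)) s =
      (fun r => u r ⬝ᵥ (Smat M V *ᵥ u r)) 0 := by
    intro s
    exact is_const_of_deriv_eq_zero
      (fun r => (hderiv r).differentiableAt)
      (fun r => (hderiv r).deriv) s 0
  have h0 : u 0 = ψ := by
    simp [hu, exp_zero, Matrix.one_mulVec]
  have h2 := hconst t
  simp only [h0] at h2
  exact h2

end Energy


section EnergyForm

variable (M : ℝ) (V : Matrix (Fin n) (Fin n) ℝ)

lemma quad_split (ψ : (Fin n ⊕ Fin n) → ℝ) :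
    ψ ⬝ᵥ (Smat M V *ᵥ ψ) =
      (fun i => ψ (Sum.inl i)) ⬝ᵥ V *ᵥ (fun i => ψ (Sum.inl i)) +
        (1 / M) * ∑ i, ψ (Sum.inr i) ^ 2 := by
  rw [Smat, Matrix.fromBlocks_mulVec]
  simp only [Matrix.zero_mulVec, add_zero, zero_add, Matrix.smul_mulVec,
    Matrix.one_mulVec]
  simp only [dotProduct, Fintype.sum_sum_type, Sum.elim_inl, Sum.elim_inr,
    Function.comp, Pi.smul_apply, smul_eq_mul, Matrix.mulVec]
  rw [Finset.mul_sum]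
  congr 1
  refine Finset.sum_congr rfl fun i _ => ?_
  ring

lemma energy_eq (ψ : (Fin n ⊕ Fin n) → ℝ) :
    energy M V ψ = (1 / 2) * (ψ ⬝ᵥ (Smat M V *ᵥ ψ)) := by
  rw [quad_split, energy]
  field_simp
  ring

lemma quad_pos (hM : 0 < M) (hV : V.PosDef) (ψ : (Fin n ⊕ Fin n) → ℝ) (hψ : ψ ≠ 0) :
    0 < ψ ⬝ᵥ (Smat M V *ᵥ ψ) := by
  rw [quad_split]
  set q : Fin n → ℝ := fun i => ψ (Sum.inl i) with hq
  set p : Fin n → ℝ := fun i => ψ (Sum.inr i) with hp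
  have hq0 : ∀ x : Fin n → ℝ, 0 ≤ x ⬝ᵥ V *ᵥ x := by
    intro x
    rcases eq_or_ne x 0 with rfl | hx
    · simp
    · have := hV.dotProduct_mulVec_pos hx
      simpa [star_trivial] using this.le
  have hp0 : 0 ≤ ∑ i, p i ^ 2 := Finset.sum_nonneg fun i _ => sq_nonneg _
  have hne : q ≠ 0 ∨ p ≠ 0 := by
    by_contra h
    push_neg at h
    apply hψ
    funext i
    cases i with
    | inl i => exact congrFun h.1 i
    | inr i => exact congrFun h.2 i
  rcases hne with h | h
  · have := hV.dotProduct_mulVec_pos h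
    have hq1 : 0 < q ⬝ᵥ V *ᵥ q := by simpa [star_trivial] using this
    have : 0 ≤ (1 / M) * ∑ i, p i ^ 2 := by positivity
    linarith
  · have hi : ∃ i, p i ≠ 0 := by
      by_contra hc; push_neg at hc; exact h (funext hc)
    obtain ⟨i, hi⟩ := hi
    have h1 : 0 < ∑ j, p j ^ 2 :=
      Finset.sum_pos' (fun j _ => sq_nonneg _)
        ⟨i, Finset.mem_univ i, pow_two_pos_of_ne_zero hi⟩
    have : 0 < (1 / M) * ∑ j, p j ^ 2 := by positivity
    have := hq0 q
    linarith

end EnergyForm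

lemma flow_bound (M : ℝ) (hM : 0 < M) (V : Matrix (Fin n) (Fin n) ℝ) (hV : V.PosDef) :
    ∃ K : ℝ, 0 < K ∧ ∀ (ψ : (Fin n ⊕ Fin n) → ℝ) (t : ℝ),
      ‖exp (t • hamMatrix M V) *ᵥ ψ‖ ≤ K * ‖ψ‖ := by
  have hsym : Vᵀ = V := by
    have := hV.1
    simpa [Matrix.IsHermitian, Matrix.conjTranspose_eq_transpose_of_trivial] using this
  set E : ((Fin n ⊕ Fin n) → ℝ) → ℝ := fun x => x ⬝ᵥ (Smat M V *ᵥ x) with hE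
  have hEcont : Continuous E := quad_form_continuous _
  have hEhom : ∀ (c : ℝ) x, E (c • x) = c ^ 2 * E x := fun c x => quad_form_homog _ c x
  have hEpos : ∀ x, x ≠ 0 → 0 < E x := fun x hx => quad_pos M V hM hV x hx
  have hNcont : Continuous fun x : (Fin n ⊕ Fin n) → ℝ => ‖x‖ ^ 2 :=
    continuous_norm.pow 2
  have hNhom : ∀ (c : ℝ) (x : (Fin n ⊕ Fin n) → ℝ), ‖c • x‖ ^ 2 = c ^ 2 * ‖x‖ ^ 2 := by
    intro c x
    rw [norm_smul, mul_pow, Real.norm_eq_abs, sq_abs]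
  have hNpos : ∀ x : (Fin n ⊕ Fin n) → ℝ, x ≠ 0 → 0 < ‖x‖ ^ 2 := by
    intro x hx
    have := norm_pos_iff.2 hx
    positivity
  obtain ⟨r1, hr1, hle1⟩ := quad_compare E (fun x => ‖x‖ ^ 2) hEcont hNcont hEhom hNhom hEpos
  obtain ⟨r2, hr2, hle2⟩ := quad_compare (fun x => ‖x‖ ^ 2) E hNcont hEcont hNhom hEhom hNpos
  refine ⟨Real.sqrt (1 / (r1 * r2)), Real.sqrt_pos.2 (by positivity), fun ψ t => ?_⟩
  set u := exp (t • hamMatrix M V) *ᵥ ψ with hu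
  have hcons : E u = E ψ := energy_conserved M V hsym ψ t
  have h1 : r1 * ‖u‖ ^ 2 ≤ E u := hle1 u
  have h2 : r2 * E ψ ≤ ‖ψ‖ ^ 2 := hle2 ψ
  have hsq : ‖u‖ ^ 2 ≤ (1 / (r1 * r2)) * ‖ψ‖ ^ 2 := by
    rw [hcons] at h1
    rw [div_mul_eq_mul_div, le_div_iff₀ (by positivity)]
    nlinarith
  calc ‖u‖ = Real.sqrt (‖u‖ ^ 2) := (Real.sqrt_sq (norm_nonneg _)).symm
    _ ≤ Real.sqrt ((1 / (r1 * r2)) * ‖ψ‖ ^ 2) := Real.sqrt_le_sqrt hsq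
    _ = Real.sqrt (1 / (r1 * r2)) * ‖ψ‖ := by
        rw [Real.sqrt_mul (by positivity), Real.sqrt_sq (norm_nonneg _)]

lemma flow_coord_continuous (A : Matrix (Fin n ⊕ Fin n) (Fin n ⊕ Fin n) ℝ)
    (ψ : (Fin n ⊕ Fin n) → ℝ) (i : Fin n ⊕ Fin n) :
    Continuous fun t : ℝ => (exp (t • A) *ᵥ ψ) i := by
  simp only [Matrix.mulVec, dotProduct]
  exact continuous_finset_sum _ fun j _ =>
    (((continuous_apply j).comp (continuous_apply i)).comp (exp_flow_continuous A)).mul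
      continuous_const

lemma vanish_all_pows (M : ℝ) (V : Matrix (Fin n) (Fin n) ℝ)
    (ψ : (Fin n ⊕ Fin n) → ℝ) (i0 : Fin n)
    (hvan : ∀ t ∈ Set.Ioi (0:ℝ),
      (exp (t • hamMatrix M V) *ᵥ ψ) ⬝ᵥ Pi.single (Sum.inr i0) (1:ℝ) = 0) :
    ∀ k : ℕ, ((hamMatrix M V ^ k) *ᵥ ψ) ⬝ᵥ Pi.single (Sum.inr i0) (1:ℝ) = 0 := by
  set A := hamMatrix M V with hA
  have key : ∀ k, ∀ t ∈ Set.Ioi (0:ℝ),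
      ((exp (t • A) * A ^ k) *ᵥ ψ) ⬝ᵥ Pi.single (Sum.inr i0) (1:ℝ) = 0 := by
    intro k
    induction k with
    | zero =>
      intro t ht
      simpa [Matrix.mul_one] using hvan t ht
    | succ k ih =>
      intro t ht
      have h1 := hasDerivAt_flow_mul A (A ^ k) ψ t
      have h2 := hasDerivAt_pi.1 h1 (Sum.inr i0)
      have hzero : (fun s => ((exp (s • A) * A ^ k) *ᵥ ψ) (Sum.inr i0))
          =ᶠ[nhds t] (fun _ => (0:ℝ)) := by
        filter_upwards [isOpen_Ioi.mem_nhds ht] with s hs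
        have := ih s hs
        simpa [dotProduct_single] using this
      have hD0 := h2.congr_of_eventuallyEq hzero.symm
      have huniq := (hasDerivAt_const t (0:ℝ)).unique hD0
      have : ((exp (t • A) * A * A ^ k) *ᵥ ψ) (Sum.inr i0) = 0 := huniq.symm
      rw [mul_assoc, ← pow_succ'] at this
      simpa [dotProduct_single] using this
  intro k
  set f : ℝ → ℝ := fun t => (exp (t • A) *ᵥ ((A ^ k) *ᵥ ψ)) (Sum.inr i0) with hf
  have hfc : Continuous f := flow_coord_continuous A _ _
  have hfeq : ∀ t ∈ Set.Ioi (0:ℝ), f t = 0 := by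
    intro t ht
    have h3 := key k t ht
    simp only [dotProduct_single, mul_one] at h3
    show (exp (t • A) *ᵥ A ^ k *ᵥ ψ) (Sum.inr i0) = 0
    rw [Matrix.mulVec_mulVec]
    exact h3
  have h1 : Filter.Tendsto f (nhdsWithin 0 (Set.Ioi 0)) (nhds (f 0)) :=
    (hfc.tendsto 0).mono_left nhdsWithin_le_nhds
  have h2 : Filter.Tendsto f (nhdsWithin 0 (Set.Ioi 0)) (nhds 0) := by
    apply Filter.Tendsto.congr' _ tendsto_const_nhds
    filter_upwards [self_mem_nhdsWithin] with s hs
    exact (hfeq s hs).symm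
  have hf0 : f 0 = 0 := tendsto_nhds_unique h1 h2
  have hf0' : (exp ((0:ℝ) • A) *ᵥ A ^ k *ᵥ ψ) (Sum.inr i0) = 0 := hf0
  rw [zero_smul, exp_zero, Matrix.one_mulVec] at hf0'
  simpa [dotProduct_single] using hf0'

lemma psi_zero_of_pows (M : ℝ) (hM : 0 < M) (V : Matrix (Fin n) (Fin n) ℝ)
    (hV : V.PosDef) (i0 : Fin n)
    (hcompl : Submodule.span ℝ
      (Set.range fun k : ℕ => (V ^ k).mulVec (Pi.single i0 1)) = ⊤)
    (ψ : (Fin n ⊕ Fin n) → ℝ)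
    (hall : ∀ k : ℕ, ((hamMatrix M V ^ k) *ᵥ ψ) ⬝ᵥ Pi.single (Sum.inr i0) (1:ℝ) = 0) :
    ψ = 0 := by
  have hsym : Vᵀ = V := by
    have := hV.1
    simpa [Matrix.IsHermitian, Matrix.conjTranspose_eq_transpose_of_trivial] using this
  set q : Fin n → ℝ := fun i => ψ (Sum.inl i) with hqdef
  set p : Fin n → ℝ := fun i => ψ (Sum.inr i) with hpdef
  have hcne : ∀ k : ℕ, ((-(1/M)) : ℝ) ^ k ≠ 0 :=
    fun k => pow_ne_zero k (by simp; positivity)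
  have hp : ∀ k : ℕ, ((V ^ k) *ᵥ p) i0 = 0 := by
    intro k
    have h := hall (2 * k)
    rw [ham_pow_even, Matrix.fromBlocks_mulVec] at h
    simp only [dotProduct_single, mul_one, Sum.elim_inr, Matrix.zero_mulVec,
      zero_add, Pi.add_apply] at h
    rw [smul_pow, Matrix.smul_mulVec] at h
    have h2 : ((-(1/M)) : ℝ) ^ k * ((V ^ k) *ᵥ (fun i => ψ (Sum.inr i))) i0 = 0 := h
    rcases mul_eq_zero.1 h2 with h3 | h3
    · exact absurd h3 (hcne k)
    · exact h3
  have hq : ∀ k : ℕ, ((V ^ (k + 1)) *ᵥ q) i0 = 0 := by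
    intro k
    have h := hall (2 * k + 1)
    rw [ham_pow_odd, Matrix.fromBlocks_mulVec] at h
    simp only [dotProduct_single, mul_one, Sum.elim_inr, Matrix.zero_mulVec,
      add_zero, Pi.add_apply] at h
    rw [smul_pow, Matrix.smul_mul, Matrix.smul_mulVec, Matrix.mul_neg,
      ← pow_succ] at h
    have h2 : ((-(1/M)) : ℝ) ^ k * ((-(V ^ (k+1))) *ᵥ (fun i => ψ (Sum.inl i))) i0 = 0 := h
    rcases mul_eq_zero.1 h2 with h3 | h3
    · exact absurd h3 (hcne k)
    · rw [Matrix.neg_mulVec] at h3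
      have : -(((V ^ (k+1)) *ᵥ (fun i => ψ (Sum.inl i))) i0) = 0 := h3
      linarith [this]
  have hdet : IsUnit V.det := by
    have := hV.det_pos
    exact isUnit_iff_ne_zero.2 (ne_of_gt this)
  have hp0 : p = 0 := by
    apply kill_of_span (fun k : ℕ => (V ^ k) *ᵥ Pi.single i0 1) hcompl
    intro k
    rw [dot_symm_pow V hsym k i0 p]
    exact hp k
  have hq0 : q = 0 := by
    apply kill_of_span (fun k : ℕ => (V ^ (k + 1)) *ᵥ Pi.single i0 1)
      (span_shift V hdet i0 hcompl)
    intro k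
    rw [dot_symm_pow V hsym (k + 1) i0 q]
    exact hq k
  funext i
  cases i with
  | inl i => exact congrFun hq0 i
  | inr i => exact congrFun hp0 i



/-- If `V` is symmetric positive definite with the completeness property and `ρ` is a
probability density strictly positive on `(0,∞)`, then `Δ` is a positive definite quadratic
form: `Δ(ψ) = 0` implies `ψ = 0`, and there is `r > 0` with `Δ(ψ) ≥ r·H(ψ)` for all `ψ`. -/
theorem Delta_posdef (hn : 0 < n) (M : ℝ) (hM : 0 < M)
    (V : Matrix (Fin n) (Fin n) ℝ) (hV : V.PosDef)
    (hcompl : Submodule.span ℝ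
        (Set.range fun k : ℕ => (V ^ k).mulVec (Pi.single (⟨0, hn⟩ : Fin n) 1)) = ⊤)
    (ρ : ℝ → ℝ) (hρmeas : Measurable ρ) (hρpos : ∀ t, 0 < t → 0 < ρ t)
    (hρzero : ∀ t, t ≤ 0 → ρ t = 0) (hρint : ∫ t, ρ t = 1) :
    (∀ ψ : (Fin n ⊕ Fin n) → ℝ, Delta hn M V ρ ψ = 0 → ψ = 0) ∧
      ∃ r : ℝ, 0 < r ∧ ∀ ψ : (Fin n ⊕ Fin n) → ℝ,
        r * energy M V ψ ≤ Delta hn M V ρ ψ := by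
  have hρ0 : ∀ t, 0 ≤ ρ t := by
    intro t
    rcases le_or_gt t 0 with ht | ht
    · rw [hρzero t ht]
    · exact (hρpos t ht).le
  have hρI : Integrable ρ := by
    by_contra hni
    rw [integral_undef hni] at hρint
    norm_num at hρint
  set i0 : Fin n := ⟨0, hn⟩ with hi0
  set h : ((Fin n ⊕ Fin n) → ℝ) → ℝ → ℝ :=
    fun ψ t => (exp (t • hamMatrix M V) *ᵥ ψ) ⬝ᵥ Pi.single (Sum.inr i0) (1:ℝ) with hh
  have hDelta_eq : ∀ ψ, Delta hn M V ρ ψ = ∫ t in Set.Ioi (0:ℝ), (h ψ t) ^ 2 * ρ t :=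
    fun ψ => rfl
  obtain ⟨K, hK, hKb⟩ := flow_bound M hM V hV
  have hco : ∀ ψ t, h ψ t = (exp (t • hamMatrix M V) *ᵥ ψ) (Sum.inr i0) := by
    intro ψ t
    rw [hh]
    simp [dotProduct_single]
  have habs : ∀ ψ t, |h ψ t| ≤ K * ‖ψ‖ := by
    intro ψ t
    rw [hco]
    calc |(exp (t • hamMatrix M V) *ᵥ ψ) (Sum.inr i0)|
        = ‖(exp (t • hamMatrix M V) *ᵥ ψ) (Sum.inr i0)‖ := (Real.norm_eq_abs _).symm
      _ ≤ ‖exp (t • hamMatrix M V) *ᵥ ψ‖ := norm_le_pi_norm _ _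
      _ ≤ K * ‖ψ‖ := hKb ψ t
  have hhc : ∀ ψ, Continuous (h ψ) := by
    intro ψ
    have : h ψ = fun t => (exp (t • hamMatrix M V) *ᵥ ψ) (Sum.inr i0) :=
      funext fun t => hco ψ t
    rw [this]
    exact flow_coord_continuous _ ψ _
  have hInt : ∀ ψ, Integrable (fun t => (h ψ t) ^ 2 * ρ t)
      (volume.restrict (Set.Ioi 0)) := by
    intro ψ
    refine Integrable.mono' ((hρI.restrict).const_mul ((K * ‖ψ‖) ^ 2)) ?_ ?_
    · exact ((((hhc ψ).pow 2).measurable).mul hρmeas).aestronglyMeasurable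
    · refine Filter.Eventually.of_forall fun t => ?_
      rw [Real.norm_eq_abs, abs_mul, abs_of_nonneg (hρ0 t), abs_of_nonneg (sq_nonneg _)]
      refine mul_le_mul_of_nonneg_right ?_ (hρ0 t)
      calc (h ψ t) ^ 2 = |h ψ t| ^ 2 := (sq_abs _).symm
        _ ≤ (K * ‖ψ‖) ^ 2 := by
            apply pow_le_pow_left₀ (abs_nonneg _) (habs ψ t)
  -- Part 1
  have part1 : ∀ ψ : (Fin n ⊕ Fin n) → ℝ, Delta hn M V ρ ψ = 0 → ψ = 0 := by
    intro ψ hzero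
    have hnn : 0 ≤ fun t => (h ψ t) ^ 2 * ρ t :=
      fun t => mul_nonneg (sq_nonneg _) (hρ0 t)
    have hae : (fun t => (h ψ t) ^ 2 * ρ t) =ᶠ[ae (volume.restrict (Set.Ioi 0))] 0 :=
      (integral_eq_zero_iff_of_nonneg hnn (hInt ψ)).1 ((hDelta_eq ψ).symm.trans hzero)
    have hvan : ∀ t ∈ Set.Ioi (0:ℝ), h ψ t = 0 := by
      by_contra hcon
      push_neg at hcon
      obtain ⟨t0, ht0, hne⟩ := hcon
      set N : Set ℝ := {t | (h ψ t) ^ 2 * ρ t ≠ 0} with hN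
      have hNmeas : MeasurableSet N := by
        have : Measurable fun t => (h ψ t) ^ 2 * ρ t :=
          (((hhc ψ).pow 2).measurable).mul hρmeas
        exact (this (measurableSet_singleton 0)).compl
      have hNnull : volume.restrict (Set.Ioi 0) N = 0 := by
        have := hae
        rw [Filter.EventuallyEq, ae_iff] at this
        simpa [hN] using this
      have hNnull' : volume (N ∩ Set.Ioi 0) = 0 := by
        rw [← Measure.restrict_apply hNmeas]
        exact hNnull
      set U : Set ℝ := {t | h ψ t ≠ 0} ∩ Set.Ioi 0 with hU
      have hUopen : IsOpen U :=
        (isOpen_compl_singleton.preimage (hhc ψ)).inter isOpen_Ioi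
      have hUsub : U ⊆ N ∩ Set.Ioi 0 := by
        rintro t ⟨ht1, ht2⟩
        refine ⟨?_, ht2⟩
        simp only [hN, Set.mem_setOf_eq]
        exact mul_ne_zero (pow_ne_zero 2 ht1) (ne_of_gt (hρpos t ht2))
      have hUpos : 0 < volume U := hUopen.measure_pos volume ⟨t0, hne, ht0⟩
      have : volume U = 0 := measure_mono_null hUsub hNnull'
      rw [this] at hUpos
      exact lt_irrefl 0 hUpos
    have hall := vanish_all_pows M V ψ i0 hvan
    exact psi_zero_of_pows M hM V hV i0 hcompl ψ hall
  refine ⟨part1, ?_⟩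
  -- Part 2
  have hDnn : ∀ ψ, 0 ≤ Delta hn M V ρ ψ := by
    intro ψ
    rw [hDelta_eq]
    exact integral_nonneg fun t => mul_nonneg (sq_nonneg _) (hρ0 t)
  have hlin_sub : ∀ ψ φ t, h ψ t - h φ t = h (ψ - φ) t := by
    intro ψ φ t
    rw [hh]
    simp only [Matrix.mulVec_sub, sub_dotProduct]
  have hlin_add : ∀ ψ φ t, h ψ t + h φ t = h (ψ + φ) t := by
    intro ψ φ t
    rw [hh]
    simp only [Matrix.mulVec_add, add_dotProduct]
  have hDhom : ∀ (c : ℝ) ψ, Delta hn M V ρ (c • ψ) = c ^ 2 * Delta hn M V ρ ψ := by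
    intro c ψ
    rw [hDelta_eq, hDelta_eq, ← integral_const_mul]
    congr 1
    funext t
    have hsc : h (c • ψ) t = c * h ψ t := by
      rw [hh]
      simp only [Matrix.mulVec_smul, smul_dotProduct, smul_eq_mul]
    rw [hsc]
    ring
  set c0 : ℝ := ∫ t in Set.Ioi (0:ℝ), ρ t with hc0
  have hc00 : 0 ≤ c0 := integral_nonneg hρ0
  have hbound : ∀ ψ φ, |Delta hn M V ρ ψ - Delta hn M V ρ φ| ≤
      K ^ 2 * ‖ψ - φ‖ * (‖ψ‖ + ‖φ‖) * c0 := by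
    intro ψ φ
    rw [hDelta_eq, hDelta_eq, ← integral_sub (hInt ψ) (hInt φ)]
    have h1 : |∫ t in Set.Ioi (0:ℝ), ((h ψ t) ^ 2 * ρ t - (h φ t) ^ 2 * ρ t)| ≤
        ∫ t in Set.Ioi (0:ℝ), |(h ψ t) ^ 2 * ρ t - (h φ t) ^ 2 * ρ t| := by
      rw [← Real.norm_eq_abs]
      exact (norm_integral_le_integral_norm _).trans (le_of_eq (by
        congr 1))
    refine h1.trans ?_
    have h2 : ∫ t in Set.Ioi (0:ℝ), |(h ψ t) ^ 2 * ρ t - (h φ t) ^ 2 * ρ t| ≤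
        ∫ t in Set.Ioi (0:ℝ), (K ^ 2 * ‖ψ - φ‖ * (‖ψ‖ + ‖φ‖)) * ρ t := by
      refine integral_mono ((hInt ψ).sub (hInt φ)).abs
        ((hρI.restrict).const_mul _) fun t => ?_
      have hfact : (h ψ t) ^ 2 * ρ t - (h φ t) ^ 2 * ρ t =
          ((h ψ t - h φ t) * (h ψ t + h φ t)) * ρ t := by ring
      rw [hfact, abs_mul, abs_mul, abs_of_nonneg (hρ0 t)]
      have e1 : |h ψ t - h φ t| ≤ K * ‖ψ - φ‖ := by
        rw [hlin_sub]; exact habs _ t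
      have e2 : |h ψ t + h φ t| ≤ K * (‖ψ‖ + ‖φ‖) := by
        rw [hlin_add]
        exact (habs _ t).trans (by
          have := norm_add_le ψ φ
          nlinarith)
      have e3 : |h ψ t - h φ t| * |h ψ t + h φ t| ≤
          (K * ‖ψ - φ‖) * (K * (‖ψ‖ + ‖φ‖)) :=
        mul_le_mul e1 e2 (abs_nonneg _) (by positivity)
      have e4 : (K * ‖ψ - φ‖) * (K * (‖ψ‖ + ‖φ‖)) = K ^ 2 * ‖ψ - φ‖ * (‖ψ‖ + ‖φ‖) := by
        ring
      refine mul_le_mul_of_nonneg_right ?_ (hρ0 t)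
      rw [← e4]
      exact e3
    refine h2.trans (le_of_eq ?_)
    rw [integral_const_mul]
  have hDcont : Continuous (Delta hn M V ρ) := by
    rw [continuous_iff_continuousAt]
    intro φ
    have hgt : Filter.Tendsto (fun ψ => K ^ 2 * ‖ψ - φ‖ * (‖ψ‖ + ‖φ‖) * c0)
        (nhds φ) (nhds 0) := by
      have hcont : Continuous fun ψ : (Fin n ⊕ Fin n) → ℝ =>
          K ^ 2 * ‖ψ - φ‖ * (‖ψ‖ + ‖φ‖) * c0 :=
        ((continuous_const.mul ((continuous_id.sub continuous_const).norm)).mul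
          (continuous_norm.add continuous_const)).mul continuous_const
      have := hcont.tendsto φ
      simpa using this
    have hsq : Filter.Tendsto (fun ψ => |Delta hn M V ρ ψ - Delta hn M V ρ φ|)
        (nhds φ) (nhds 0) :=
      squeeze_zero (fun ψ => abs_nonneg _) (fun ψ => hbound ψ φ) hgt
    have : Filter.Tendsto (fun ψ => Delta hn M V ρ ψ - Delta hn M V ρ φ)
        (nhds φ) (nhds 0) := by
      rw [tendsto_zero_iff_norm_tendsto_zero]
      simpa [Real.norm_eq_abs] using hsq
    have := this.add (tendsto_const_nhds (x := Delta hn M V ρ φ))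
    simpa [ContinuousAt] using this
  have hEeq : energy M V = fun ψ => (1/2) * (ψ ⬝ᵥ (Smat M V *ᵥ ψ)) :=
    funext fun ψ => energy_eq M V ψ
  have hEcont : Continuous (energy M V) := by
    rw [hEeq]
    exact continuous_const.mul (quad_form_continuous _)
  have hEhom : ∀ (c : ℝ) ψ, energy M V (c • ψ) = c ^ 2 * energy M V ψ := by
    intro c ψ
    rw [hEeq]
    simp only []
    rw [quad_form_homog]
    ring
  obtain ⟨r, hr, hcomp⟩ := quad_compare (Delta hn M V ρ) (energy M V) hDcont hEcont
    hDhom hEhom (fun x hx => (hDnn x).lt_of_ne fun heq => hx (part1 x heq.symm))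
  exact ⟨r, hr, hcomp⟩
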